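/- Let μ = Σ_{i=1}^m γ_i δ_{u_i} be a discrete Borel measure on S^{n-1} with distinct unit vectors u_i positively spanning R^n, γ_i > 0, Σ γ_i = 1. Then μ satisfies the subspace concentration condition if and only if γ = (γ_1,...,γ_m) lies in the relative interior of P_scc(U) = (1/n)·P(M_U). -/

import Mathlib

open MeasureTheory Module Submodule
open scoped RealInnerProductSpace Pointwise Classical

def IsBasisIndex {n m : ℕ} (U : Fin m → EuclideanSpace ℝ (Fin n)) (I : Finset (Fin m)) : Prop :=
  I.card = n ∧ Submodule.span ℝ (U '' ↑I) = ⊤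

noncomputable def matroidPolytope {n m : ℕ} (U : Fin m → EuclideanSpace ℝ (Fin n)) :
    Set (Fin m → ℝ) :=
  convexHull ℝ {x | ∃ I : Finset (Fin m), IsBasisIndex U I ∧
    x = fun j => if j ∈ I then (1 : ℝ) else 0}

def PosSpanning {n m : ℕ} (U : Fin m → EuclideanSpace ℝ (Fin n)) : Prop :=
  ∀ x : EuclideanSpace ℝ (Fin n),
    ∃ c : Fin m → ℝ, (∀ i, 0 ≤ c i) ∧ x = ∑ i, c i • U i

/-- The subspace concentration condition for the discrete measure `∑ γᵢ δ_{uᵢ}` (with total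
mass `1`): (i) for every proper subspace `L`, `∑_{uᵢ ∈ L} γᵢ ≤ dim L / n`, and (ii) equality
holds iff there is a complementary subspace `L'` with all `uᵢ` in `L ∪ L'`. -/
def SCC {n m : ℕ} (U : Fin m → EuclideanSpace ℝ (Fin n)) (γ : Fin m → ℝ) : Prop :=
  (∀ L : Submodule ℝ (EuclideanSpace ℝ (Fin n)), L ≠ ⊤ →
      ∑ i ∈ Finset.univ.filter (fun i => U i ∈ L), γ i ≤ (finrank ℝ L : ℝ) / n) ∧
    ∀ L : Submodule ℝ (EuclideanSpace ℝ (Fin n)), L ≠ ⊤ →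
      ((∑ i ∈ Finset.univ.filter (fun i => U i ∈ L), γ i = (finrank ℝ L : ℝ) / n) ↔
        ∃ L' : Submodule ℝ (EuclideanSpace ℝ (Fin n)), IsCompl L L' ∧
          ∀ i, U i ∈ L ∨ U i ∈ L')

open Set


noncomputable section AuxRelint

variable {E : Type*} [NormedAddCommGroup E] [NormedSpace ℝ E]

lemma prolong_of_mem_intrinsicInterior {s : Set E} (hconv : Convex ℝ s) {x : E}
    (hx : x ∈ intrinsicInterior ℝ s) {y : E} (hy : y ∈ s) :
    ∃ ε : ℝ, 0 < ε ∧ x + ε • (x - y) ∈ s := by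
  obtain ⟨x', hx', hcoe⟩ := hx
  subst hcoe
  rw [mem_interior_iff_mem_nhds, Metric.mem_nhds_iff] at hx'
  obtain ⟨δ, hδ, hball⟩ := hx'
  set x : E := (x' : E) with hxdef
  refine ⟨δ / (2 * (‖x - y‖ + 1)), by positivity, ?_⟩
  set ε : ℝ := δ / (2 * (‖x - y‖ + 1)) with hεdef
  have hε : 0 < ε := by positivity
  have hxA : x ∈ affineSpan ℝ s := x'.2
  have hyA : y ∈ affineSpan ℝ s := subset_affineSpan ℝ s hy
  have hzA : x + ε • (x - y) ∈ affineSpan ℝ s := by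
    have := (affineSpan ℝ s).smul_vsub_vadd_mem ε hxA hyA hxA
    simpa [vsub_eq_sub, vadd_eq_add, add_comm] using this
  have hdist : dist (⟨x + ε • (x - y), hzA⟩ : affineSpan ℝ s) x' < δ := by
    rw [Subtype.dist_eq]
    simp only [dist_eq_norm]
    have : x + ε • (x - y) - x = ε • (x - y) := by abel
    rw [this, norm_smul, Real.norm_eq_abs, abs_of_pos hε]
    have hN := norm_nonneg (x - y)
    rw [hεdef, div_mul_eq_mul_div, div_lt_iff₀ (by positivity)]
    nlinarith
  exact hball hdist

lemma mem_intrinsicInterior_of_prolong [FiniteDimensional ℝ E]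
    {s : Set E} (hconv : Convex ℝ s) {x : E} (hx : x ∈ s)
    (h : ∀ y ∈ s, ∃ ε : ℝ, 0 < ε ∧ x + ε • (x - y) ∈ s) :
    x ∈ intrinsicInterior ℝ s := by
  obtain ⟨w, hwmem⟩ := Set.Nonempty.intrinsicInterior hconv ⟨x, hx⟩
  obtain ⟨w', hw', hwcoe⟩ := hwmem
  rw [mem_interior_iff_mem_nhds, Metric.mem_nhds_iff] at hw'
  obtain ⟨δ, hδ, hball⟩ := hw'
  set w : E := (w' : E) with hwdef
  have hws : w ∈ s := by
    have : w' ∈ ((↑) ⁻¹' s : Set <| affineSpan ℝ s) := hball (by simpa using hδ)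
    simpa using this
  obtain ⟨ε, hε, hz⟩ := h w hws
  set z : E := x + ε • (x - w) with hzdef
  set t : ℝ := ε / (1 + ε) with htdef
  have ht0 : 0 < t := by positivity
  have ht1 : t < 1 := by
    rw [htdef, div_lt_one (by positivity)]; linarith
  have hxA : x ∈ affineSpan ℝ s := subset_affineSpan ℝ s hx
  refine ⟨⟨x, hxA⟩, ?_, rfl⟩
  rw [mem_interior_iff_mem_nhds]
  refine Filter.mem_of_superset (Metric.ball_mem_nhds _ (by positivity : (0:ℝ) < t * δ)) ?_
  rintro a' ha'
  set a : E := (a' : E) with hadef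
  have hdista : dist a x < t * δ := by
    have := ha'
    rw [Metric.mem_ball, Subtype.dist_eq] at this
    exact this
  have hwA : w ∈ affineSpan ℝ s := w'.2
  set wa : E := w + t⁻¹ • (a - x) with hwadef
  have hwaA : wa ∈ affineSpan ℝ s := by
    have := (affineSpan ℝ s).smul_vsub_vadd_mem t⁻¹ (a'.2 : a ∈ affineSpan ℝ s) hxA hwA
    simpa [vsub_eq_sub, vadd_eq_add, add_comm] using this
  have hwas : wa ∈ s := by
    have hdist : dist (⟨wa, hwaA⟩ : affineSpan ℝ s) w' < δ := by
      rw [Subtype.dist_eq]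
      simp only [dist_eq_norm]
      have : wa - w = t⁻¹ • (a - x) := by rw [hwadef]; abel
      rw [this, norm_smul, Real.norm_eq_abs, abs_of_pos (by positivity : (0:ℝ) < t⁻¹)]
      have : ‖a - x‖ < t * δ := by rw [← dist_eq_norm]; exact hdista
      calc t⁻¹ * ‖a - x‖ < t⁻¹ * (t * δ) := by
            apply mul_lt_mul_of_pos_left this (by positivity)
        _ = δ := by field_simp
    have := hball hdist
    simpa using this
  have hcombo : a = t • wa + (1 - t) • z := by
    have h1t : 1 - t = 1 / (1 + ε) := by
      rw [htdef]; field_simp; ring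
    have h2 : (1 - t) * ε = t := by
      rw [h1t, htdef]; field_simp
    rw [hwadef, hzdef]
    match_scalars <;> (rw [htdef]; field_simp) <;> ring
  have hmem : a ∈ s := by
    rw [hcombo]
    exact hconv hwas hz ht0.le (by linarith) (by ring)
  exact hmem

end AuxRelint


noncomputable section Greedy

variable {E : Type*} [NormedAddCommGroup E] [NormedSpace ℝ E]

noncomputable def greedySet (f : ℕ → E) : ℕ → Set E
  | 0 => ∅
  | (k+1) => if f k ∈ span ℝ (greedySet f k) then greedySet f k
             else insert (f k) (greedySet f k)

lemma Iio_succ_nat (k : ℕ) : Set.Iio (k+1) = insert k (Set.Iio k) := by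
  ext j; simp only [Set.mem_Iio, Set.mem_insert_iff]; omega

lemma greedySet_mono' (f : ℕ → E) {k l : ℕ} (h : k ≤ l) : greedySet f k ⊆ greedySet f l := by
  induction l with
  | zero => simp_all
  | succ l ih =>
    rcases Nat.lt_or_ge k (l+1) with h' | h'
    · have := ih (Nat.lt_succ_iff.mp h')
      rw [greedySet]
      split <;> intro x hx
      · exact this hx
      · exact Set.mem_insert_of_mem _ (this hx)
    · have : k = l + 1 := le_antisymm h h'
      subst this; exact le_refl _

lemma greedySet_subset' (f : ℕ → E) : ∀ k, greedySet f k ⊆ f '' Set.Iio k := by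
  intro k
  induction k with
  | zero => simp [greedySet]
  | succ k ih =>
    rw [greedySet, Iio_succ_nat, Set.image_insert_eq]
    split
    · exact ih.trans (Set.subset_insert _ _)
    · exact Set.insert_subset_insert ih

lemma greedySet_span' (f : ℕ → E) : ∀ k, span ℝ (greedySet f k) = span ℝ (f '' Set.Iio k) := by
  intro k
  induction k with
  | zero =>
    have : Set.Iio 0 = (∅ : Set ℕ) := by ext j; simp
    simp [greedySet, this]
  | succ k ih =>
    by_cases h : f k ∈ span ℝ (greedySet f k)
    · rw [greedySet, if_pos h, Iio_succ_nat, Set.image_insert_eq, span_insert, ih,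
        sup_eq_right.mpr]
      rw [span_le, Set.singleton_subset_iff]
      rwa [ih] at h
    · rw [greedySet, if_neg h, Iio_succ_nat, Set.image_insert_eq, span_insert, span_insert, ih]

lemma greedySet_indep' (f : ℕ → E) :
    ∀ k, LinearIndependent ℝ (fun x => (x : E) : greedySet f k → E) := by
  intro k
  induction k with
  | zero => rw [greedySet]; exact linearIndependent_empty ℝ E
  | succ k ih =>
    by_cases h : f k ∈ span ℝ (greedySet f k)
    · rw [greedySet, if_pos h]; exact ih
    · rw [greedySet, if_neg h]; exact LinearIndepOn.insert (K := ℝ) (v := id) ih (by simpa using h)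

lemma greedySet_finite' (f : ℕ → E) (k : ℕ) : (greedySet f k).Finite :=
  (Set.finite_Iio k |>.image f).subset (greedySet_subset' f k)

end Greedy

noncomputable section BasisLemmas

variable {n m : ℕ} {U : Fin m → EuclideanSpace ℝ (Fin n)}

/-- a basis index family is linearly independent -/
lemma IsBasisIndex.indep' {I : Finset (Fin m)} (hI : IsBasisIndex U I) :
    LinearIndependent ℝ (fun i : ↥I => U i) := by
  apply linearIndependent_of_top_le_span_of_card_eq_finrank
  · rw [show Set.range (fun i : ↥I => U i) = U '' ↑I by
      rw [Set.image_eq_range]; rfl, hI.2]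
  · rw [Fintype.card_coe, hI.1, finrank_euclideanSpace_fin]

/-- independence restricts to subsets -/
lemma indep_subset' {I J : Finset (Fin m)} (hJI : J ⊆ I)
    (hI : LinearIndependent ℝ (fun i : ↥I => U i)) :
    LinearIndependent ℝ (fun i : ↥J => U i) := by
  have : (fun i : ↥J => U i) = (fun i : ↥I => U i) ∘ (fun j : ↥J => (⟨j.1, hJI j.2⟩ : ↥I)) := rfl
  rw [this]
  exact hI.comp _ (fun a b hab => by
    apply Subtype.ext
    simpa using congrArg Subtype.val hab)

/-- an independent family of vectors lying in a submodule has card at most its finrank -/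
lemma card_le_finrank' {J : Finset (Fin m)}
    (hJ : LinearIndependent ℝ (fun i : ↥J => U i))
    (W : Submodule ℝ (EuclideanSpace ℝ (Fin n))) (hW : ∀ i ∈ J, U i ∈ W) :
    J.card ≤ finrank ℝ W := by
  have hg : LinearIndependent ℝ (fun i : ↥J => (⟨U i, hW i i.2⟩ : W)) := by
    apply LinearIndependent.of_comp W.subtype
    exact hJ
  simpa [Fintype.card_coe] using hg.fintype_card_le_finrank

/-- an independent index family has card equal to the finrank of its span -/
lemma card_eq_finrank_span' {J : Finset (Fin m)} (hinj : Function.Injective U)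
    (hJ : LinearIndependent ℝ (fun i : ↥J => U i)) :
    J.card = finrank ℝ (span ℝ (U '' ↑J)) := by
  classical
  have himg : LinearIndependent ℝ (fun x : (U '' (↑J : Set (Fin m))) => (x : EuclideanSpace ℝ (Fin n))) :=
    LinearIndepOn.id_image (show LinearIndepOn ℝ U (↑J : Set (Fin m)) from hJ)
  have hcoe : (U '' (↑J : Set (Fin m))) = ↑(J.image U) := by rw [Finset.coe_image]
  rw [hcoe] at himg ⊢
  rw [finrank_span_finset_eq_card himg, Finset.card_image_of_injective _ hinj]

/-- the greedy construction of a basis compatible with a chain -/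
lemma greedy_basis' (hinj : Function.Injective U)
    (f : ℕ → EuclideanSpace ℝ (Fin n)) (hf : ∀ k, ∃ i, f k = U i) (N : ℕ)
    (hspan : span ℝ (f '' Set.Iio N) = ⊤) :
    ∃ I : Finset (Fin m), IsBasisIndex U I ∧
      ∀ k, k ≤ N → span ℝ (U '' ↑(I.filter (fun i => U i ∈ f '' Set.Iio k)))
        = span ℝ (f '' Set.Iio k) := by
  classical
  set G : Set (EuclideanSpace ℝ (Fin n)) := greedySet f N with hG
  have hGfin : G.Finite := greedySet_finite' f N
  set I : Finset (Fin m) := Finset.univ.filter (fun i => U i ∈ G) with hI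
  have himg : U '' ↑I = G := by
    apply Set.Subset.antisymm
    · rintro x ⟨i, hi, rfl⟩
      simp only [hI, Finset.coe_filter, Set.mem_setOf_eq] at hi
      exact hi.2
    · intro x hx
      obtain ⟨j, _, rfl⟩ := greedySet_subset' f N hx
      obtain ⟨i, hi⟩ := hf j
      refine ⟨i, ?_, hi.symm⟩
      simp only [hI, Finset.coe_filter, Set.mem_setOf_eq]
      exact ⟨Finset.mem_univ i, by rw [← hi]; exact hx⟩
  have hspanI : span ℝ (U '' ↑I) = ⊤ := by
    rw [himg, hG, greedySet_span' f N, hspan]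
  have hGcoe : (↑(I.image U) : Set (EuclideanSpace ℝ (Fin n))) = G := by
    rw [Finset.coe_image]; exact himg
  have hindepG : LinearIndependent ℝ (fun x : (↑(I.image U) : Set (EuclideanSpace ℝ (Fin n))) => (x : EuclideanSpace ℝ (Fin n))) := by
    rw [hGcoe]; exact greedySet_indep' f N
  have hcard : I.card = n := by
    have h1 : (I.image U).card = I.card := Finset.card_image_of_injective _ hinj
    have h2 : finrank ℝ (span ℝ (↑(I.image U) : Set (EuclideanSpace ℝ (Fin n)))) = (I.image U).card :=
      finrank_span_finset_eq_card hindepG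
    rw [hGcoe] at h2
    rw [greedySet_span' f N, hspan, finrank_top, finrank_euclideanSpace_fin] at h2
    omega
  refine ⟨I, ⟨hcard, hspanI⟩, ?_⟩
  intro k hk
  apply le_antisymm
  · rw [span_le]
    rintro x ⟨i, hi, rfl⟩
    simp only [Finset.coe_filter, Set.mem_setOf_eq] at hi
    exact subset_span hi.2
  · rw [← greedySet_span' f k, span_le]
    intro x hx
    have hxG : x ∈ G := greedySet_mono' f hk hx
    have hxI : x ∈ U '' ↑I := himg ▸ hxG
    obtain ⟨i, hi, rfl⟩ := hxI
    apply subset_span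
    refine ⟨i, ?_, rfl⟩
    simp only [Finset.coe_filter, Set.mem_setOf_eq]
    exact ⟨hi, greedySet_subset' f k hx⟩
end BasisLemmas



lemma abel_identity (d w : ℕ → ℝ) : ∀ p : ℕ,
    ∑ k ∈ Finset.range (p+1), d k * w k
      = (∑ k ∈ Finset.range p, (d k - d (k+1)) * (∑ j ∈ Finset.range (k+1), w j))
        + d p * (∑ j ∈ Finset.range (p+1), w j) := by
  intro p
  induction p with
  | zero => simp
  | succ p ih =>
    rw [Finset.sum_range_succ (fun k => d k * w k), ih, Finset.sum_range_succ
      (fun k => (d k - d (k+1)) * (∑ j ∈ Finset.range (k+1), w j)),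
      Finset.sum_range_succ w (p+1)]
    ring

lemma abel_le' (p : ℕ) (d u v : ℕ → ℝ)
    (hd : ∀ k, k + 1 < p → d (k+1) ≤ d k)
    (hpart : ∀ k, k + 1 < p →
      ∑ j ∈ Finset.range (k+1), u j ≤ ∑ j ∈ Finset.range (k+1), v j)
    (htot : ∑ j ∈ Finset.range p, u j = ∑ j ∈ Finset.range p, v j) :
    ∑ k ∈ Finset.range p, d k * u k ≤ ∑ k ∈ Finset.range p, d k * v k := by
  cases p with
  | zero => simp
  | succ q =>
    rw [abel_identity d u q, abel_identity d v q, htot]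
    apply add_le_add_left
    apply Finset.sum_le_sum
    intro k hk
    rw [Finset.mem_range] at hk
    have h1 : d (k+1) ≤ d k := hd k (by omega)
    apply mul_le_mul_of_nonneg_left (hpart k (by omega)) (by linarith)

noncomputable section Poly

variable {n m : ℕ} {U : Fin m → EuclideanSpace ℝ (Fin n)}

def genSet (U : Fin m → EuclideanSpace ℝ (Fin n)) : Set (Fin m → ℝ) :=
  {x | ∃ I : Finset (Fin m), IsBasisIndex U I ∧
    x = fun j => if j ∈ I then (1 : ℝ) else 0}

def rkU (U : Fin m → EuclideanSpace ℝ (Fin n)) (A : Finset (Fin m)) : ℕ :=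
  finrank ℝ (Submodule.span ℝ (U '' ↑A))

lemma genSet_finite : (genSet U).Finite := by
  apply Set.Finite.subset (Set.finite_range
    (fun I : Finset (Fin m) => fun j => if j ∈ I then (1:ℝ) else 0))
  rintro x ⟨I, _, rfl⟩
  exact ⟨I, rfl⟩

lemma isLinearMap_sum (A : Finset (Fin m)) :
    IsLinearMap ℝ (fun y : Fin m → ℝ => ∑ i ∈ A, y i) :=
  ⟨fun x y => by simp [Finset.sum_add_distrib], fun c x => by simp [Finset.mul_sum]⟩

lemma sum_indicator (I A : Finset (Fin m)) :
    ∑ i ∈ A, (if i ∈ I then (1:ℝ) else 0) = ((A ∩ I).card : ℝ) := by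
  rw [Finset.sum_ite_mem, Finset.sum_const, nsmul_eq_mul, mul_one]


/-- The count of a basis inside a finset is at most the rank of the finset. -/
lemma card_inter_le_rk {I : Finset (Fin m)} (hI : IsBasisIndex U I) (A : Finset (Fin m)) :
    ((A ∩ I).card : ℝ) ≤ (rkU U A : ℝ) := by
  have h1 : (A ∩ I).card ≤ rkU U A := by
    apply card_le_finrank' (indep_subset' (Finset.inter_subset_right) hI.indep')
    intro i hi
    exact subset_span ⟨i, by
      simpa using (Finset.mem_inter.mp hi).1, rfl⟩
  exact_mod_cast h1

/-- every point of the scaled polytope satisfies the rank inequalities -/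
lemma poly_le (hn : 0 < n) {y : Fin m → ℝ}
    (hy : y ∈ convexHull ℝ ((n:ℝ)⁻¹ • genSet U)) (A : Finset (Fin m)) :
    ∑ i ∈ A, y i ≤ (rkU U A : ℝ) / n := by
  have hconv : Convex ℝ {y : Fin m → ℝ | ∑ i ∈ A, y i ≤ (rkU U A : ℝ) / n} :=
    convex_halfSpace_le (isLinearMap_sum A) _
  refine convexHull_min ?_ hconv hy
  rintro y ⟨x, ⟨I, hI, rfl⟩, rfl⟩
  simp only [Set.mem_setOf_eq]
  have : ∑ i ∈ A, ((n:ℝ)⁻¹ • fun j => if j ∈ I then (1:ℝ) else 0) i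
      = (n:ℝ)⁻¹ * ((A ∩ I).card : ℝ) := by
    simp only [Pi.smul_apply, smul_eq_mul, ← Finset.mul_sum, sum_indicator]
  rw [this, div_eq_inv_mul]
  have := card_inter_le_rk hI A
  have hn' : (0:ℝ) < (n:ℝ)⁻¹ := by positivity
  nlinarith

/-- every point of the scaled polytope has coordinate sum 1 -/
lemma poly_sum_one (hn : 0 < n) {y : Fin m → ℝ}
    (hy : y ∈ convexHull ℝ ((n:ℝ)⁻¹ • genSet U)) :
    ∑ i, y i = 1 := by
  have hconv : Convex ℝ {y : Fin m → ℝ | ∑ i, y i = 1} :=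
    convex_hyperplane (isLinearMap_sum Finset.univ) _
  refine convexHull_min ?_ hconv hy
  rintro y ⟨x, ⟨I, hI, rfl⟩, rfl⟩
  simp only [Set.mem_setOf_eq]
  have : ∑ i, ((n:ℝ)⁻¹ • fun j => if j ∈ I then (1:ℝ) else 0) i
      = (n:ℝ)⁻¹ * ((Finset.univ ∩ I).card : ℝ) := by
    simp only [Pi.smul_apply, smul_eq_mul, ← Finset.mul_sum, sum_indicator]
  rw [this, Finset.univ_inter, hI.1]
  field_simp

/-- Lemma S : if `L, L'` are complementary and all vectors lie in `L ∪ L'`, then the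
coordinate sum over `F = {i | uᵢ ∈ L}` is constantly `finrank L / n` on the polytope. -/
lemma poly_separator (hn : 0 < n) {L L' : Submodule ℝ (EuclideanSpace ℝ (Fin n))}
    (hC : IsCompl L L') (hcover : ∀ i, U i ∈ L ∨ U i ∈ L') {y : Fin m → ℝ}
    (hy : y ∈ convexHull ℝ ((n:ℝ)⁻¹ • genSet U)) :
    ∑ i ∈ Finset.univ.filter (fun i => U i ∈ L), y i = (finrank ℝ L : ℝ) / n := by
  set F := Finset.univ.filter (fun i => U i ∈ L) with hF
  have hconv : Convex ℝ {y : Fin m → ℝ | ∑ i ∈ F, y i = (finrank ℝ L : ℝ) / n} :=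
    convex_hyperplane (isLinearMap_sum F) _
  refine convexHull_min ?_ hconv hy
  rintro y ⟨x, ⟨I, hI, rfl⟩, rfl⟩
  simp only [Set.mem_setOf_eq]
  have hsum : ∑ i ∈ F, ((n:ℝ)⁻¹ • fun j => if j ∈ I then (1:ℝ) else 0) i
      = (n:ℝ)⁻¹ * ((F ∩ I).card : ℝ) := by
    simp only [Pi.smul_apply, smul_eq_mul, ← Finset.mul_sum, sum_indicator]
  rw [hsum]
  -- counting argument
  have hranks : finrank ℝ L + finrank ℝ L' = n := by
    have h := Submodule.finrank_sup_add_finrank_inf_eq L L'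
    rw [hC.sup_eq_top, hC.inf_eq_bot, finrank_top, finrank_euclideanSpace_fin,
      finrank_bot] at h
    omega
  have h1 : (I ∩ F).card ≤ finrank ℝ L := by
    apply card_le_finrank' (indep_subset' (Finset.inter_subset_left) hI.indep')
    intro i hi
    have := (Finset.mem_inter.mp hi).2
    rw [hF, Finset.mem_filter] at this
    exact this.2
  have h2 : (I \ F).card ≤ finrank ℝ L' := by
    apply card_le_finrank' (indep_subset' (Finset.sdiff_subset) hI.indep')
    intro i hi
    rw [Finset.mem_sdiff, hF, Finset.mem_filter] at hi
    rcases hcover i with h | h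
    · exact absurd ⟨Finset.mem_univ i, h⟩ hi.2
    · exact h
  have h3 : (I ∩ F).card + (I \ F).card = I.card := Finset.card_inter_add_card_sdiff I F
  have h4 : (I ∩ F).card = finrank ℝ L := by
    have hcard := hI.1
    omega
  have h5 : (F ∩ I).card = finrank ℝ L := by rwa [Finset.inter_comm]
  rw [h5, div_eq_inv_mul]

/-- Edmonds: the rank constraints plus total sum 1 imply membership in the scaled
matroid base polytope. -/
lemma mem_poly_of_constraints (hn : 0 < n) (hm : 0 < m) (hinj : Function.Injective U)
    (hspanU : span ℝ (Set.range U) = ⊤)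
    {z : Fin m → ℝ} (hup : ∀ A : Finset (Fin m), ∑ i ∈ A, z i ≤ (rkU U A : ℝ) / n)
    (htot : ∑ i, z i = 1) :
    z ∈ convexHull ℝ ((n:ℝ)⁻¹ • genSet U) := by
  by_contra hz
  have hfin : ((n:ℝ)⁻¹ • genSet U).Finite := genSet_finite.smul_set
  obtain ⟨φ, b, hb1, hb2⟩ := geometric_hahn_banach_closed_point
    (convex_convexHull ℝ _) (hfin.isCompact_convexHull (𝕜 := ℝ)).isClosed hz
  set c : Fin m → ℝ := fun i => φ (fun j => if i = j then (1:ℝ) else 0) with hc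
  have hφ : ∀ y : Fin m → ℝ, φ y = ∑ i, y i * c i := by
    intro y
    conv_lhs => rw [pi_eq_sum_univ y]
    rw [map_sum]
    refine Finset.sum_congr rfl fun i _ => ?_
    rw [_root_.map_smul, smul_eq_mul]
  set ord : Equiv.Perm (Fin m) := Tuple.sort (fun i => - c i) with hord
  have hsorted : ∀ j k : Fin m, j ≤ k → c (ord k) ≤ c (ord j) := by
    intro j k hjk
    have := Tuple.monotone_sort (fun i => - c i) hjk
    simpa using this
  set f : ℕ → EuclideanSpace ℝ (Fin n) :=
    fun k => if h : k < m then U (ord ⟨k, h⟩) else U (ord ⟨0, hm⟩) with hf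
  have hfU : ∀ k, ∃ i, f k = U i := by
    intro k
    by_cases h : k < m
    · exact ⟨ord ⟨k, h⟩, by rw [hf]; simp [dif_pos h]⟩
    · exact ⟨ord ⟨0, hm⟩, by rw [hf]; simp [dif_neg h]⟩
  have hfval : ∀ (j : ℕ) (h : j < m), f j = U (ord ⟨j, h⟩) := by
    intro j h; rw [hf]; simp [dif_pos h]
  have hfim : f '' Set.Iio m = Set.range U := by
    ext x
    constructor
    · rintro ⟨j, hj, rfl⟩
      rw [hfval j hj]; exact ⟨_, rfl⟩
    · rintro ⟨i, rfl⟩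
      refine ⟨((ord.symm i : Fin m) : ℕ), (ord.symm i).2, ?_⟩
      rw [hfval _ (ord.symm i).2]
      simp
  obtain ⟨I, hIb, hchain⟩ := greedy_basis' hinj f hfU m (by rw [hfim, hspanU])
  -- prefix membership
  have hPmem : ∀ (q : ℕ), q ≤ m → ∀ i : Fin m,
      (U i ∈ f '' Set.Iio q ↔ ((ord.symm i : Fin m) : ℕ) < q) := by
    intro q hq i
    constructor
    · rintro ⟨j, hj, hfj⟩
      have hjm : j < m := lt_of_lt_of_le hj hq
      rw [hfval j hjm] at hfj
      have : ord ⟨j, hjm⟩ = i := hinj hfj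
      rw [← this, Equiv.symm_apply_apply]
      exact hj
    · intro hlt
      refine ⟨((ord.symm i : Fin m) : ℕ), hlt, ?_⟩
      rw [hfval _ (ord.symm i).2]
      simp
  -- prefix sums
  have hpre : ∀ (w : Fin m → ℝ) (q : ℕ), q ≤ m →
      ∑ j ∈ Finset.range q, (if h : j < m then w (ord ⟨j, h⟩) else 0)
        = ∑ i ∈ Finset.univ.filter (fun i => U i ∈ f '' Set.Iio q), w i := by
    intro w q hq
    refine Finset.sum_bij' (i := fun j hj => ord ⟨j, lt_of_lt_of_le (Finset.mem_range.mp hj) hq⟩)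
      (j := fun i _ => ((ord.symm i : Fin m) : ℕ)) ?_ ?_ ?_ ?_ ?_
    · intro a ha
      rw [Finset.mem_filter]
      refine ⟨Finset.mem_univ _, ?_⟩
      rw [hPmem q hq]
      simpa using Finset.mem_range.mp ha
    · intro i hi
      rw [Finset.mem_filter] at hi
      rw [Finset.mem_range]
      exact (hPmem q hq i).mp hi.2
    · intro a ha; simp
    · intro i hi; simp
    · intro a ha
      rw [dif_pos (lt_of_lt_of_le (Finset.mem_range.mp ha) hq)]
  -- prefix index sets and their cardinalities
  have hcardq : ∀ (q : ℕ), q ≤ m →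
      ((I.filter (fun i => U i ∈ f '' Set.Iio q)).card : ℝ)
        = (rkU U (Finset.univ.filter (fun i => U i ∈ f '' Set.Iio q)) : ℝ) := by
    intro q hq
    have hspanP : span ℝ (U '' ↑(Finset.univ.filter (fun i => U i ∈ f '' Set.Iio q)))
        = span ℝ (f '' Set.Iio q) := by
      apply le_antisymm
      · rw [span_le]
        rintro x ⟨i, hi, rfl⟩
        simp only [Finset.coe_filter, Set.mem_setOf_eq] at hi
        exact subset_span hi.2
      · apply span_mono
        rintro x ⟨j, hj, rfl⟩
        have hjm : j < m := lt_of_lt_of_le hj hq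
        rw [hfval j hjm]
        refine ⟨ord ⟨j, hjm⟩, ?_, rfl⟩
        simp only [Finset.coe_filter, Set.mem_setOf_eq]
        refine ⟨Finset.mem_univ _, ⟨j, hj, (hfval j hjm).symm ▸ rfl⟩⟩
    have hcard := card_eq_finrank_span' hinj
      (indep_subset' (Finset.filter_subset (fun i => U i ∈ f '' Set.Iio q) I) hIb.indep')
    rw [rkU, hspanP, hcard, hchain q hq]
  -- the three sequences
  set u : ℕ → ℝ := fun j => if h : j < m then z (ord ⟨j, h⟩) else 0 with hu
  set v : ℕ → ℝ := fun j =>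
    if h : j < m then (n:ℝ)⁻¹ * (if ord ⟨j, h⟩ ∈ I then (1:ℝ) else 0) else 0 with hv
  set d : ℕ → ℝ := fun j => if h : j < m then c (ord ⟨j, h⟩) else 0 with hd
  have hIPq : ∀ q : ℕ, (Finset.univ.filter (fun i => U i ∈ f '' Set.Iio q)) ∩ I
      = I.filter (fun i => U i ∈ f '' Set.Iio q) := by
    intro q
    ext i
    simp only [Finset.mem_inter, Finset.mem_filter, Finset.mem_univ, true_and]
    tauto
  have hvsum : ∀ q : ℕ, q ≤ m → ∑ j ∈ Finset.range q, v j
      = (n:ℝ)⁻¹ * ((I.filter (fun i => U i ∈ f '' Set.Iio q)).card : ℝ) := by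
    intro q hq
    have := hpre (fun i => (n:ℝ)⁻¹ * (if i ∈ I then (1:ℝ) else 0)) q hq
    rw [hv]
    rw [this, ← Finset.mul_sum, sum_indicator, hIPq]
  have hPuniv : Finset.univ.filter (fun i => U i ∈ f '' Set.Iio m) = Finset.univ := by
    apply Finset.filter_true_of_mem
    intro i _
    rw [hfim]; exact ⟨i, rfl⟩
  have hIuniv : I.filter (fun i => U i ∈ f '' Set.Iio m) = I := by
    apply Finset.filter_true_of_mem
    intro i _
    rw [hfim]; exact ⟨i, rfl⟩
  have habel : ∑ k ∈ Finset.range m, d k * u k ≤ ∑ k ∈ Finset.range m, d k * v k := by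
    apply abel_le'
    · intro k hk
      simp only [hd]
      rw [dif_pos hk, dif_pos (by omega : k < m)]
      exact hsorted ⟨k, by omega⟩ ⟨k+1, hk⟩ (by simp [Fin.mk_le_mk])
    · intro k hk
      have hq : k + 1 ≤ m := by omega
      simp only [hu]
      rw [hpre z (k+1) hq, hvsum (k+1) hq]
      calc ∑ i ∈ Finset.univ.filter (fun i => U i ∈ f '' Set.Iio (k+1)), z i
          ≤ (rkU U (Finset.univ.filter (fun i => U i ∈ f '' Set.Iio (k+1))) : ℝ) / n :=
            hup _
        _ = (n:ℝ)⁻¹ * ((I.filter (fun i => U i ∈ f '' Set.Iio (k+1))).card : ℝ) := by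
            rw [← hcardq (k+1) hq, div_eq_inv_mul]
    · simp only [hu]
      rw [hpre z m le_rfl, hvsum m le_rfl, hPuniv, htot, hIuniv, hIb.1]
      field_simp
  -- conclude
  set vI : Fin m → ℝ := (n:ℝ)⁻¹ • (fun j => if j ∈ I then (1:ℝ) else 0) with hvI
  have hvImem : vI ∈ convexHull ℝ ((n:ℝ)⁻¹ • genSet U) :=
    subset_convexHull ℝ _ ⟨_, ⟨I, hIb, rfl⟩, rfl⟩
  have hφz : φ z = ∑ k ∈ Finset.range m, d k * u k := by
    rw [hφ z]
    have h := hpre (fun i => z i * c i) m le_rfl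
    rw [hPuniv] at h
    rw [← h]
    refine Finset.sum_congr rfl fun j hj => ?_
    have hjm : j < m := Finset.mem_range.mp hj
    simp only [hd, hu, dif_pos hjm]
    ring
  have hφv : φ vI = ∑ k ∈ Finset.range m, d k * v k := by
    rw [hφ vI]
    have h := hpre (fun i => vI i * c i) m le_rfl
    rw [hPuniv] at h
    rw [← h]
    refine Finset.sum_congr rfl fun j hj => ?_
    have hjm : j < m := Finset.mem_range.mp hj
    simp only [hd, hv, hvI, dif_pos hjm, Pi.smul_apply, smul_eq_mul]
    ring
  have h1 : φ vI < b := hb1 vI hvImem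
  have h2 : b < φ z := hb2
  rw [hφz] at h2
  rw [hφv] at h1
  linarith

end Poly


theorem stmt_5 (n m : ℕ) (hn : 0 < n) (U : Fin m → EuclideanSpace ℝ (Fin n))
    (hunit : ∀ i, ‖U i‖ = 1) (hinj : Function.Injective U) (hpos : PosSpanning U)
    (γ : Fin m → ℝ) (hγpos : ∀ i, 0 < γ i) (hγsum : ∑ i, γ i = 1) :
    SCC U γ ↔ γ ∈ intrinsicInterior ℝ ((n : ℝ)⁻¹ • matroidPolytope U) := by
  classical
  have hn' : (0:ℝ) < n := by exact_mod_cast hn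
  have hm : 0 < m := by
    by_contra h
    push_neg at h
    interval_cases m
    simp at hγsum
  have hspanU : span ℝ (Set.range U) = ⊤ := by
    rw [eq_top_iff]
    intro x _
    obtain ⟨c, hc0, rfl⟩ := hpos x
    exact Submodule.sum_mem _ (fun i _ => Submodule.smul_mem _ _ (subset_span ⟨i, rfl⟩))
  have hsEq : (n:ℝ)⁻¹ • matroidPolytope U = convexHull ℝ ((n:ℝ)⁻¹ • genSet U) := by
    rw [show matroidPolytope U = convexHull ℝ (genSet U) from rfl, convexHull_smul]
  set S := convexHull ℝ ((n:ℝ)⁻¹ • genSet U) with hS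
  -- rank monotonicity helper
  have hrkle : ∀ L : Submodule ℝ (EuclideanSpace ℝ (Fin n)),
      (rkU U (Finset.univ.filter (fun i => U i ∈ L)) : ℝ) ≤ (finrank ℝ L : ℝ) := by
    intro L
    have h2 : rkU U (Finset.univ.filter (fun i => U i ∈ L)) ≤ finrank ℝ L := by
      rw [rkU]
      apply Submodule.finrank_mono
      rw [span_le]
      rintro x ⟨i, hi, rfl⟩
      simp only [Finset.coe_filter, Set.mem_setOf_eq] at hi
      exact hi.2
    exact_mod_cast h2
  constructor
  · -- forward : SCC → relint
    rintro ⟨hscc1, hscc2⟩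
    rw [hsEq]
    have hsub : ∀ A : Finset (Fin m), ∑ i ∈ A, γ i ≤ (rkU U A : ℝ) / n := by
      intro A
      by_cases htop : span ℝ (U '' ↑A) = ⊤
      · have hr : (rkU U A : ℝ) = n := by
          rw [rkU, htop, finrank_top, finrank_euclideanSpace_fin]
        have h1 : ∑ i ∈ A, γ i ≤ 1 := by
          rw [← hγsum]
          exact Finset.sum_le_sum_of_subset_of_nonneg (Finset.subset_univ A)
            (fun i _ _ => (hγpos i).le)
        rw [hr, div_self (ne_of_gt hn')]
        exact h1
      · have hAF : A ⊆ Finset.univ.filter (fun i => U i ∈ span ℝ (U '' ↑A)) := by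
          intro i hi
          simp only [Finset.mem_filter]
          exact ⟨Finset.mem_univ _, subset_span ⟨i, Finset.mem_coe.mpr hi, rfl⟩⟩
        calc ∑ i ∈ A, γ i
            ≤ ∑ i ∈ Finset.univ.filter (fun i => U i ∈ span ℝ (U '' ↑A)), γ i :=
              Finset.sum_le_sum_of_subset_of_nonneg hAF (fun i _ _ => (hγpos i).le)
          _ ≤ (finrank ℝ (span ℝ (U '' ↑A)) : ℝ) / n := hscc1 _ htop
          _ = (rkU U A : ℝ) / n := by rw [rkU]
    have hγmem : γ ∈ S := mem_poly_of_constraints hn hm hinj hspanU hsub hγsum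
    have htight : ∀ A : Finset (Fin m), ∑ i ∈ A, γ i = (rkU U A : ℝ)/n →
        ∀ y ∈ S, ∑ i ∈ A, y i = (rkU U A : ℝ)/n := by
      intro A hA y hy
      by_cases htop : span ℝ (U '' ↑A) = ⊤
      · have hr : (rkU U A : ℝ) = n := by
          rw [rkU, htop, finrank_top, finrank_euclideanSpace_fin]
        have hAuniv : A = Finset.univ := by
          by_contra hne
          have : ∃ i, i ∉ A := by
            by_contra hall
            push_neg at hall
            exact hne (Finset.eq_univ_iff_forall.mpr hall)
          obtain ⟨i, hiA⟩ := this
          have hlt := Finset.sum_lt_sum_of_subset (Finset.subset_univ A)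
            (Finset.mem_univ i) hiA (hγpos i) (fun j _ _ => (hγpos j).le)
          rw [hγsum] at hlt
          rw [hr, div_self (ne_of_gt hn')] at hA
          linarith
        rw [hr, div_self (ne_of_gt hn'), hAuniv]
        exact poly_sum_one hn hy
      · set L := span ℝ (U '' ↑A) with hL
        set F := Finset.univ.filter (fun i => U i ∈ L) with hF
        have hAF : A ⊆ F := by
          intro i hi
          simp only [hF, Finset.mem_filter]
          exact ⟨Finset.mem_univ _, subset_span ⟨i, Finset.mem_coe.mpr hi, rfl⟩⟩
        have hrkA : (rkU U A : ℝ) = (finrank ℝ L : ℝ) := by rw [rkU]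
        have hFge : ∑ i ∈ A, γ i ≤ ∑ i ∈ F, γ i :=
          Finset.sum_le_sum_of_subset_of_nonneg hAF (fun i _ _ => (hγpos i).le)
        have hFle : ∑ i ∈ F, γ i ≤ (finrank ℝ L : ℝ) / n := hscc1 L htop
        have hFeq : ∑ i ∈ F, γ i = (finrank ℝ L : ℝ) / n := by
          apply le_antisymm hFle
          rw [← hrkA, ← hA]
          exact hFge
        obtain ⟨L', hC, hcover⟩ := (hscc2 L htop).mp hFeq
        have hsep := poly_separator hn hC hcover hy
        have hFA : F = A := by
          apply Finset.Subset.antisymm _ hAF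
          intro i hiF
          by_contra hiA
          have hlt := Finset.sum_lt_sum_of_subset hAF hiF hiA (hγpos i)
            (fun j _ _ => (hγpos j).le)
          rw [hFeq, hA, hrkA] at hlt
          linarith
        rw [hrkA, ← hFA]
        exact hsep
    apply mem_intrinsicInterior_of_prolong (convex_convexHull ℝ _) hγmem
    intro y hy
    have hy1 : ∑ i, y i = 1 := poly_sum_one hn hy
    have hAe : ∀ A : Finset (Fin m), ∃ e : ℝ, 0 < e ∧ ∀ ε : ℝ, 0 < ε → ε ≤ e →
        ∑ i ∈ A, (γ i + ε * (γ i - y i)) ≤ (rkU U A : ℝ)/n := by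
      intro A
      have hexp : ∀ ε : ℝ, ∑ i ∈ A, (γ i + ε * (γ i - y i))
          = ∑ i ∈ A, γ i + ε * (∑ i ∈ A, γ i - ∑ i ∈ A, y i) := by
        intro ε
        rw [Finset.sum_add_distrib, ← Finset.mul_sum, Finset.sum_sub_distrib]
      by_cases ht : ∑ i ∈ A, γ i = (rkU U A : ℝ)/n
      · refine ⟨1, one_pos, fun ε hε hεle => ?_⟩
        rw [hexp, htight A ht y hy, ht]
        simp
      · have hlt : ∑ i ∈ A, γ i < (rkU U A : ℝ)/n := lt_of_le_of_ne (hsub A) ht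
        set D : ℝ := ∑ i ∈ A, γ i - ∑ i ∈ A, y i with hD
        refine ⟨((rkU U A : ℝ)/n - ∑ i ∈ A, γ i) / (1 + |D|),
          div_pos (by linarith) (by positivity), fun ε hε hεle => ?_⟩
        rw [hexp]
        have h1 : D ≤ |D| := le_abs_self D
        have h2 : ε * D ≤ ε * |D| := mul_le_mul_of_nonneg_left h1 hε.le
        have h3 : ε * |D| ≤ ε * (1 + |D|) := by
          apply mul_le_mul_of_nonneg_left _ hε.le
          have := abs_nonneg D
          linarith
        have h4 : ε * (1 + |D|) ≤ (rkU U A : ℝ)/n - ∑ i ∈ A, γ i := by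
          have habs : (0:ℝ) < 1 + |D| := by positivity
          calc ε * (1 + |D|) ≤ ((rkU U A : ℝ)/n - ∑ i ∈ A, γ i) / (1 + |D|) * (1 + |D|) :=
                mul_le_mul_of_nonneg_right hεle habs.le
            _ = (rkU U A : ℝ)/n - ∑ i ∈ A, γ i := by field_simp
        have h5 : ε * D ≤ (rkU U A : ℝ)/n - ∑ i ∈ A, γ i :=
          le_trans h2 (le_trans h3 h4)
        linarith
    choose e he1 he2 using hAe
    have hne : (Finset.univ.powerset : Finset (Finset (Fin m))).Nonempty :=
      ⟨∅, Finset.empty_mem_powerset _⟩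
    set ε := Finset.univ.powerset.inf' hne e with hε
    have hεpos : 0 < ε := by
      rw [hε, Finset.lt_inf'_iff]
      exact fun A _ => he1 A
    refine ⟨ε, hεpos, ?_⟩
    apply mem_poly_of_constraints hn hm hinj hspanU
    · intro A
      have heq1 : ∑ i ∈ A, (γ + ε • (γ - y)) i = ∑ i ∈ A, (γ i + ε * (γ i - y i)) := by
        refine Finset.sum_congr rfl fun i _ => ?_
        simp [smul_eq_mul]
      rw [heq1]
      exact he2 A ε hεpos (Finset.inf'_le e (Finset.mem_powerset.mpr (Finset.subset_univ A)))
    · have heq1 : ∑ i, (γ + ε • (γ - y)) i = ∑ i, γ i + ε * (∑ i, γ i - ∑ i, y i) := by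
        have hpt : ∀ i, (γ + ε • (γ - y)) i = γ i + ε * (γ i - y i) := by
          intro i; simp [smul_eq_mul]
        calc ∑ i, (γ + ε • (γ - y)) i = ∑ i, (γ i + ε * (γ i - y i)) :=
              Finset.sum_congr rfl (fun i _ => hpt i)
          _ = ∑ i, γ i + ε * (∑ i, γ i - ∑ i, y i) := by
              rw [Finset.sum_add_distrib, ← Finset.mul_sum, Finset.sum_sub_distrib]
      rw [heq1, hγsum, hy1]
      ring
  · -- backward : relint → SCC
    intro hγrel
    rw [hsEq] at hγrel
    have hγmem : γ ∈ S := intrinsicInterior_subset hγrel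
    have hle : ∀ L : Submodule ℝ (EuclideanSpace ℝ (Fin n)),
        ∀ y ∈ S, ∑ i ∈ Finset.univ.filter (fun i => U i ∈ L), y i ≤ (finrank ℝ L : ℝ)/n := by
      intro L y hy
      refine le_trans (poly_le hn hy _) ?_
      have h3 := hrkle L
      have h4 := mul_le_mul_of_nonneg_right h3 (inv_nonneg.mpr hn'.le)
      simpa [div_eq_mul_inv] using h4
    refine ⟨fun L _ => hle L γ hγmem, ?_⟩
    intro L hLtop
    constructor
    · -- equality → separator
      intro heq
      set F := Finset.univ.filter (fun i => U i ∈ L) with hF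
      have hconst : ∀ y ∈ S, ∑ i ∈ F, y i = (finrank ℝ L : ℝ)/n := by
        intro y hy
        obtain ⟨ε, hε, hz⟩ := prolong_of_mem_intrinsicInterior (convex_convexHull ℝ _) hγrel hy
        have hzle : ∑ i ∈ F, (γ + ε • (γ - y)) i ≤ (finrank ℝ L : ℝ)/n := hle L _ hz
        have hyle : ∑ i ∈ F, y i ≤ (finrank ℝ L : ℝ)/n := hle L y hy
        have hexp : ∑ i ∈ F, (γ + ε • (γ - y)) i
            = ∑ i ∈ F, γ i + ε * (∑ i ∈ F, γ i - ∑ i ∈ F, y i) := by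
          have hpt : ∀ i, (γ + ε • (γ - y)) i = γ i + ε * (γ i - y i) := by
            intro i; simp [smul_eq_mul]
          calc ∑ i ∈ F, (γ + ε • (γ - y)) i = ∑ i ∈ F, (γ i + ε * (γ i - y i)) :=
                Finset.sum_congr rfl (fun i _ => hpt i)
            _ = ∑ i ∈ F, γ i + ε * (∑ i ∈ F, γ i - ∑ i ∈ F, y i) := by
                rw [Finset.sum_add_distrib, ← Finset.mul_sum, Finset.sum_sub_distrib]
        rw [hexp, heq] at hzle
        have : (finrank ℝ L : ℝ)/n - ∑ i ∈ F, y i ≤ 0 := by nlinarith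
        linarith
      -- construct the complementary subspace
      set T := Finset.univ.filter (fun i => U i ∉ L) with hT
      set L' := span ℝ (U '' ↑T) with hL'
      set tc := T.card with htc
      set f : ℕ → EuclideanSpace ℝ (Fin n) := fun k =>
        if h : k < tc then U ((T.orderIsoOfFin rfl ⟨k, h⟩ : ↥T) : Fin m)
        else if h2 : k - tc < m then U ⟨k - tc, h2⟩ else U (⟨0, hm⟩ : Fin m) with hf
      have hfval1 : ∀ (k : ℕ) (h : k < tc),
          f k = U ((T.orderIsoOfFin rfl ⟨k, h⟩ : ↥T) : Fin m) := by
        intro k h; simp only [hf]; rw [dif_pos h]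
      have hfval2 : ∀ (k : ℕ), ¬ k < tc → ∀ (h2 : k - tc < m), f k = U ⟨k - tc, h2⟩ := by
        intro k h h2; simp only [hf]; rw [dif_neg h, dif_pos h2]
      have hfval3 : ∀ (k : ℕ), ¬ k < tc → ¬ k - tc < m → f k = U (⟨0, hm⟩ : Fin m) := by
        intro k h h2; simp only [hf]; rw [dif_neg h, dif_neg h2]
      have hfU : ∀ k, ∃ i, f k = U i := by
        intro k
        by_cases h : k < tc
        · exact ⟨_, hfval1 k h⟩
        · by_cases h2 : k - tc < m
          · exact ⟨_, hfval2 k h h2⟩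
          · exact ⟨_, hfval3 k h h2⟩
      have him1 : f '' Set.Iio tc = U '' ↑T := by
        ext x
        constructor
        · rintro ⟨j, hj, rfl⟩
          rw [hfval1 j hj]
          exact ⟨_, (T.orderIsoOfFin rfl ⟨j, hj⟩).2, rfl⟩
        · rintro ⟨i, hi, rfl⟩
          set j := (T.orderIsoOfFin rfl).symm ⟨i, hi⟩ with hjj
          refine ⟨(j : ℕ), j.2, ?_⟩
          rw [hfval1 (j : ℕ) j.2]
          congr 1
          have : (T.orderIsoOfFin rfl) ⟨(j : ℕ), j.2⟩ = ⟨i, hi⟩ := by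
            rw [show (⟨(j : ℕ), j.2⟩ : Fin tc) = j from rfl, hjj]
            exact (T.orderIsoOfFin rfl).apply_symm_apply _
          rw [this]
      have him2 : f '' Set.Iio (tc + m) = Set.range U := by
        apply Set.Subset.antisymm
        · rintro x ⟨j, _, rfl⟩
          obtain ⟨i, hi⟩ := hfU j
          exact ⟨i, hi.symm⟩
        · rintro x ⟨i, rfl⟩
          refine ⟨tc + (i : ℕ), by simp only [Set.mem_Iio]; omega, ?_⟩
          rw [hfval2 (tc + (i:ℕ)) (by omega) (by omega : tc + (i:ℕ) - tc < m)]
          exact congrArg U (Fin.ext (by simp))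
      obtain ⟨I, hIb, hchain⟩ := greedy_basis' hinj f hfU (tc + m)
        (by rw [him2, hspanU])
      have hchainT := hchain tc (Nat.le_add_right _ _)
      set J := I.filter (fun i => U i ∈ f '' Set.Iio tc) with hJ
      have hJspan : span ℝ (U '' ↑J) = L' := by
        rw [hchainT, him1, hL']
      have hJcard : J.card = finrank ℝ L' := by
        rw [card_eq_finrank_span' hinj
          (indep_subset' (Finset.filter_subset _ _) hIb.indep'), hJspan]
      have hcover : ∀ i, U i ∈ L ∨ U i ∈ L' := by
        intro i
        by_cases h : U i ∈ L
        · exact Or.inl h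
        · refine Or.inr (subset_span ⟨i, ?_, rfl⟩)
          simp only [hT, Finset.coe_filter, Set.mem_setOf_eq]
          exact ⟨Finset.mem_univ _, h⟩
      have hsup : L ⊔ L' = ⊤ := by
        rw [eq_top_iff, ← hspanU, span_le]
        rintro x ⟨i, rfl⟩
        rcases hcover i with h | h
        · exact Submodule.mem_sup_left h
        · exact Submodule.mem_sup_right h
      -- counting at a vertex
      have hvmem : ((n:ℝ)⁻¹ • (fun j => if j ∈ I then (1:ℝ) else 0) : Fin m → ℝ) ∈ S :=
        subset_convexHull ℝ _ ⟨_, ⟨I, hIb, rfl⟩, rfl⟩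
      have hFI : ((F ∩ I).card : ℝ) = (finrank ℝ L : ℝ) := by
        have h := hconst _ hvmem
        have h2 : ∑ i ∈ F, ((n:ℝ)⁻¹ • (fun j => if j ∈ I then (1:ℝ) else 0) : Fin m → ℝ) i
            = (n:ℝ)⁻¹ * ((F ∩ I).card : ℝ) := by
          simp only [Pi.smul_apply, smul_eq_mul, ← Finset.mul_sum, sum_indicator]
        rw [h2] at h
        rw [div_eq_inv_mul] at h
        exact mul_left_cancel₀ (inv_ne_zero (ne_of_gt hn')) h
      have hFInat : (F ∩ I).card = finrank ℝ L := by exact_mod_cast hFI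
      have hdisj : Disjoint (F ∩ I) J := by
        rw [Finset.disjoint_left]
        intro i hi hiJ
        have hiL : U i ∈ L := by
          have := (Finset.mem_inter.mp hi).1
          rw [hF, Finset.mem_filter] at this
          exact this.2
        have hiT : U i ∈ U '' ↑T := by
          have := (Finset.mem_filter.mp hiJ).2
          rwa [him1] at this
        obtain ⟨i', hi', hii⟩ := hiT
        have : i' = i := hinj hii
        subst this
        simp only [hT, Finset.coe_filter, Set.mem_setOf_eq] at hi'
        exact hi'.2 hiL
      have hcount : finrank ℝ L + finrank ℝ L' ≤ n := by
        have hcu : ((F ∩ I) ∪ J).card = (F ∩ I).card + J.card :=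
          Finset.card_union_of_disjoint hdisj
        have hsub2 : (F ∩ I) ∪ J ⊆ I :=
          Finset.union_subset Finset.inter_subset_right (Finset.filter_subset _ _)
        have hle2 := Finset.card_le_card hsub2
        rw [hcu, hIb.1] at hle2
        omega
      have hinf : L ⊓ L' = ⊥ := by
        have hh := Submodule.finrank_sup_add_finrank_inf_eq L L'
        rw [hsup, finrank_top, finrank_euclideanSpace_fin] at hh
        have : finrank ℝ (L ⊓ L' : Submodule ℝ (EuclideanSpace ℝ (Fin n))) = 0 := by omega
        exact Submodule.finrank_eq_zero.mp this
      exact ⟨L', ⟨disjoint_iff.mpr hinf, codisjoint_iff.mpr hsup⟩, hcover⟩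
    · -- separator → equality
      rintro ⟨L', hC, hcover⟩
      exact poly_separator hn hC hcover hγmem
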